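/- Let x* ∈ ℝ^{n×p} have every row x*_i ∈ Ω_i. Then x* is an optimal solution of the resource allocation problem min_{x∈ℝ^{n×p}} Σ_{i=1}^n f_i(x_i) subject to Σ_{i=1}^n (x_i − r_i) = 0 and x_i ∈ Ω_i for all i, if and only if there exist a matrix q* ∈ ℝ^{(n−1)×p} and a matrix D ∈ ℝ^{n×p} whose i-th row d_i satisfies f_i(y) ≥ f_i(x*_i) + ⟨d_i, y − x*_i⟩ for all y ∈ Ω_i (i.e., d_i is a subgradient of f_i + ι_{Ω_i} at x*_i), such that x* − r + c Uᵀ q* = 0 and U D = 0. -/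

import Mathlib

open Matrix

noncomputable section

open Finset


-- row of a sum of smul of matrices
lemma rowP {n p : ℕ} {ι : Type} [Fintype ι] (w : ι → ℝ)
    (F : ι → Matrix (Fin n) (Fin p) ℝ) (i : Fin n) :
    (∑ o, w o • F o) i = ∑ o, w o • (F o i) := by
  funext j
  rw [Matrix.sum_apply]
  simp [Finset.sum_apply]

lemma sum_mem_P {n p : ℕ} {ι : Type} [Fintype ι] {Ω : Fin n → Set (Fin p → ℝ)}
    (hΩcv : ∀ i, Convex ℝ (Ω i)) (w : ι → ℝ) (F : ι → Matrix (Fin n) (Fin p) ℝ)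
    (hw : ∀ o, 0 ≤ w o) (hw1 : ∑ o, w o = 1) (hF : ∀ o i, F o i ∈ Ω i) (i : Fin n) :
    (∑ o, w o • F o) i ∈ Ω i := by
  rw [rowP]
  exact (hΩcv i).sum_mem (fun o _ => hw o) hw1 (fun o _ => hF o i)

lemma sum_res {n p : ℕ} {ι : Type} [Fintype ι] (r : Matrix (Fin n) (Fin p) ℝ)
    (w : ι → ℝ) (hw1 : ∑ o, w o = 1) (F : ι → Matrix (Fin n) (Fin p) ℝ) :
    (∑ i, ((∑ o, w o • F o) i - r i)) = ∑ o, w o • (∑ i, (F o i - r i)) := by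
  funext j
  simp only [Finset.sum_apply, Pi.sub_apply, Pi.smul_apply, rowP, smul_eq_mul,
    Finset.mul_sum, mul_sub, Finset.sum_sub_distrib]
  rw [Finset.sum_comm]
  simp only [← Finset.mul_sum]
  rw [← Finset.sum_mul, hw1, one_mul]

lemma sum_val {n p : ℕ} {ι : Type} [Fintype ι] {f : Fin n → (Fin p → ℝ) → ℝ}
    (hf : ∀ i, ConvexOn ℝ Set.univ (f i)) (w : ι → ℝ) (F : ι → Matrix (Fin n) (Fin p) ℝ)
    (hw : ∀ o, 0 ≤ w o) (hw1 : ∑ o, w o = 1) :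
    ∑ i, f i ((∑ o, w o • F o) i) ≤ ∑ o, w o * (∑ i, f i (F o i)) := by
  calc ∑ i, f i ((∑ o, w o • F o) i) = ∑ i, f i (∑ o, w o • (F o i)) := by
        simp only [rowP]
      _ ≤ ∑ i, ∑ o, w o * f i (F o i) := by
        refine Finset.sum_le_sum fun i _ => ?_
        simpa using (hf i).map_sum_le (fun o _ => hw o) hw1 (by simp)
      _ = ∑ o, w o * (∑ i, f i (F o i)) := by
        rw [Finset.sum_comm]
        simp [Finset.mul_sum]
open Matrix Finset

lemma relint_ext {p : ℕ} {Ω : Set (Fin p → ℝ)} (hcv : Convex ℝ Ω)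
    {a y : Fin p → ℝ} (ha : a ∈ intrinsicInterior ℝ Ω) (hy : y ∈ Ω) :
    ∃ ε : ℝ, 0 < ε ∧ ∀ η : ℝ, 0 ≤ η → η ≤ ε → a + η • (a - y) ∈ Ω := by
  have haΩ : a ∈ Ω := intrinsicInterior_subset ha
  rw [mem_intrinsicInterior] at ha
  obtain ⟨b, hb, hba⟩ := ha
  -- curve t ↦ a + t • (a - y) inside the affine span
  have hmem : ∀ t : ℝ, a + t • (a - y) ∈ (affineSpan ℝ Ω : Set (Fin p → ℝ)) := by
    intro t
    have h1 : a ∈ affineSpan ℝ Ω := by rw [← hba]; exact b.2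
    have h2 : y ∈ affineSpan ℝ Ω := subset_affineSpan ℝ Ω hy
    have := AffineSubspace.smul_vsub_vadd_mem (affineSpan ℝ Ω) t h1 h2 h1
    simpa [vsub_eq_sub, vadd_eq_add, add_comm] using this
  set γ : ℝ → (affineSpan ℝ Ω : Set (Fin p → ℝ)) := fun t => ⟨a + t • (a - y), hmem t⟩ with hγ
  have hγc : Continuous γ := by
    apply Continuous.subtype_mk
    fun_prop
  have hγ0 : γ 0 = b := by
    apply Subtype.ext
    simp [hγ, hba]
  have hopen : IsOpen (γ ⁻¹' interior (Subtype.val ⁻¹' Ω)) :=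
    isOpen_interior.preimage hγc
  have h0 : (0:ℝ) ∈ γ ⁻¹' interior (Subtype.val ⁻¹' Ω) := by
    simp only [Set.mem_preimage, hγ0]; exact hb
  obtain ⟨ε, hε, hball⟩ := Metric.isOpen_iff.1 hopen 0 h0
  refine ⟨ε/2, by positivity, fun η h0η hηε => ?_⟩
  have hη : γ η ∈ interior (Subtype.val ⁻¹' Ω) := by
    apply hball
    simp only [Metric.mem_ball, Real.dist_eq, sub_zero]
    rw [abs_of_nonneg h0η]; linarith
  have := interior_subset hη
  simpa [hγ] using this

lemma Ut_surj {n : ℕ} (hn : 2 ≤ n) (U : Matrix (Fin (n - 1)) (Fin n) ℝ)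
    (hU : ∀ v : Fin n → ℝ, U.mulVec v = 0 ↔ ∃ a : ℝ, v = fun _ => a)
    (v : Fin n → ℝ) (hv : ∑ i, v i = 0) : ∃ w, Uᵀ.mulVec w = v := by
  classical
  -- the sum functional
  let σ : (Fin n → ℝ) →ₗ[ℝ] ℝ :=
    { toFun := fun u => ∑ i, u i
      map_add' := by intro a b; simp [Finset.sum_add_distrib]
      map_smul' := by intro c a; simp [Finset.mul_sum] }
  have hσsurj : LinearMap.range σ = ⊤ := by
    rw [LinearMap.range_eq_top]
    intro t
    refine ⟨fun i => t / n, ?_⟩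
    have hn0 : (n:ℝ) ≠ 0 := by positivity
    simp [σ]
    field_simp
  have hker : Module.finrank ℝ (LinearMap.ker σ) = n - 1 := by
    have := LinearMap.finrank_range_add_finrank_ker σ
    rw [hσsurj] at this
    simp [Module.finrank_self] at this
    omega
  -- kernel of U.mulVecLin is the span of the all-ones vector
  have hkerU : LinearMap.ker U.mulVecLin = Submodule.span ℝ {(fun _ => (1:ℝ) : Fin n → ℝ)} := by
    ext u
    rw [LinearMap.mem_ker, Matrix.mulVecLin_apply, hU, Submodule.mem_span_singleton]
    constructor
    · rintro ⟨a, rfl⟩; exact ⟨a, by funext i; simp⟩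
    · rintro ⟨a, rfl⟩; exact ⟨a, by funext i; simp⟩
  have hones : (fun _ => (1:ℝ) : Fin n → ℝ) ≠ 0 := by
    intro h
    have := congrFun h ⟨0, by omega⟩
    simp at this
  have hrankU : U.rank = n - 1 := by
    have h1 := LinearMap.finrank_range_add_finrank_ker U.mulVecLin
    rw [hkerU, finrank_span_singleton hones] at h1
    simp only [Module.finrank_fintype_fun_eq_card, Fintype.card_fin] at h1
    have : Matrix.rank U = Module.finrank ℝ (LinearMap.range U.mulVecLin) := rfl
    omega
  have hrangele : LinearMap.range (Uᵀ.mulVecLin) ≤ LinearMap.ker σ := by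
    rintro x ⟨w, rfl⟩
    have hU1 : U.mulVec (fun _ => (1:ℝ)) = 0 := (hU _).2 ⟨1, rfl⟩
    simp only [LinearMap.mem_ker]
    show σ (Uᵀ.mulVec w) = 0
    have : ∀ i, Uᵀ.mulVec w i = ∑ k, U k i * w k := by
      intro i; simp [Matrix.mulVec, dotProduct, Matrix.transpose_apply]
    calc σ (Uᵀ.mulVec w) = ∑ i, ∑ k, U k i * w k := by
          simp only [σ, LinearMap.coe_mk, AddHom.coe_mk]
          exact Finset.sum_congr rfl fun i _ => this i
      _ = ∑ k, (∑ i, U k i) * w k := by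
          rw [Finset.sum_comm]
          simp [Finset.sum_mul]
      _ = 0 := by
          refine Finset.sum_eq_zero fun k _ => ?_
          have := congrFun hU1 k
          simp only [Matrix.mulVec, dotProduct, mul_one] at this
          simp [this]
  have hrangeeq : LinearMap.range (Uᵀ.mulVecLin) = LinearMap.ker σ := by
    apply Submodule.eq_of_le_of_finrank_eq hrangele
    have : Module.finrank ℝ (LinearMap.range (Uᵀ.mulVecLin)) = Uᵀ.rank := rfl
    rw [this, Matrix.rank_transpose, hrankU, hker]
  have hvmem : v ∈ LinearMap.ker σ := by
    simp only [LinearMap.mem_ker]; exact hv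
  rw [← hrangeeq] at hvmem
  obtain ⟨w, hw⟩ := hvmem
  exact ⟨w, hw⟩


lemma Sext_lemma {n p : ℕ} (hn : 2 ≤ n)
    (Ω : Fin n → Set (Fin p → ℝ)) (hΩcv : ∀ i, Convex ℝ (Ω i))
    (r xt : Matrix (Fin n) (Fin p) ℝ)
    (hxt0 : (∑ i, (xt i - r i)) = 0)
    (hxtint : ∀ i, xt i ∈ intrinsicInterior ℝ (Ω i)) :
    ∀ x : Matrix (Fin n) (Fin p) ℝ, (∀ i, x i ∈ Ω i) →
      ∃ ε : ℝ, 0 < ε ∧ ∃ z : Matrix (Fin n) (Fin p) ℝ, (∀ i, z i ∈ Ω i) ∧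
        (∑ i, (z i - r i)) = -ε • (∑ i, (x i - r i)) := by
  intro x hx
  choose εf hεf hmemf using fun i => relint_ext (hΩcv i) (hxtint i) (hx i)
  haveI : NeZero n := ⟨by omega⟩
  have hne : (Finset.univ : Finset (Fin n)).Nonempty := Finset.univ_nonempty
  set ε := Finset.univ.inf' hne εf with hε
  have hεpos : 0 < ε := (Finset.lt_inf'_iff hne).2 fun i _ => hεf i
  refine ⟨ε, hεpos, xt + ε • (xt - x), fun i => ?_, ?_⟩
  · have hrow : (xt + ε • (xt - x)) i = xt i + ε • (xt i - x i) := by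
      funext j
      simp [Matrix.add_apply, Matrix.smul_apply, Matrix.sub_apply]
    rw [hrow]
    exact hmemf i ε hεpos.le (Finset.inf'_le _ (Finset.mem_univ i))
  · have hrow : ∀ i, (xt + ε • (xt - x)) i - r i
        = (xt i - r i) + ε • ((xt i - r i) - (x i - r i)) := by
      intro i; funext j
      simp [Matrix.add_apply, Matrix.smul_apply, Matrix.sub_apply, smul_eq_mul]
      ring
    rw [Finset.sum_congr rfl fun i _ => hrow i]
    rw [Finset.sum_add_distrib, hxt0, ← Finset.smul_sum, Finset.sum_sub_distrib, hxt0]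
    funext j
    simp

set_option maxHeartbeats 1000000 in

lemma ball_real {n p : ℕ} (hn : 2 ≤ n)
    (f : Fin n → (Fin p → ℝ) → ℝ) (hf : ∀ i, ConvexOn ℝ Set.univ (f i))
    (Ω : Fin n → Set (Fin p → ℝ)) (hΩcv : ∀ i, Convex ℝ (Ω i))
    (r xt : Matrix (Fin n) (Fin p) ℝ)
    (hxt0 : (∑ i, (xt i - r i)) = 0)
    (hxtP : ∀ i, xt i ∈ Ω i)
    (S : Set (Fin p → ℝ))
    (hS : S = {u | ∃ x : Matrix (Fin n) (Fin p) ℝ, (∀ i, x i ∈ Ω i) ∧ (∑ i, (x i - r i)) = u})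
    (Sext : ∀ x : Matrix (Fin n) (Fin p) ℝ, (∀ i, x i ∈ Ω i) →
      ∃ ε : ℝ, 0 < ε ∧ ∃ z : Matrix (Fin n) (Fin p) ℝ, (∀ i, z i ∈ Ω i) ∧
        (∑ i, (z i - r i)) = -ε • (∑ i, (x i - r i))) :
    ∃ δ : ℝ, 0 < δ ∧ ∃ M0 : ℝ, ∀ u : Fin p → ℝ, u ∈ Submodule.span ℝ S → ‖u‖ < δ →
      ∃ x : Matrix (Fin n) (Fin p) ℝ, (∀ i, x i ∈ Ω i) ∧ (∑ i, (x i - r i)) = u ∧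
        ∑ i, f i (x i) ≤ M0 := by
  classical
  obtain ⟨bs, hbsS, hbspan, hbli⟩ := exists_linearIndependent ℝ S
  have hbfin : bs.Finite := hbli.setFinite
  haveI : Fintype bs := hbfin.fintype
  -- realizers for basis vectors
  have hreal : ∀ v : bs, ∃ x : Matrix (Fin n) (Fin p) ℝ,
      (∀ i, x i ∈ Ω i) ∧ (∑ i, (x i - r i)) = (v : Fin p → ℝ) := by
    intro v
    have := hbsS v.2
    rw [hS] at this
    exact this
  choose xv hxvP hxvres using hreal
  have hreal2 : ∀ v : bs, ∃ ε : ℝ, 0 < ε ∧ ∃ z : Matrix (Fin n) (Fin p) ℝ,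
      (∀ i, z i ∈ Ω i) ∧ (∑ i, (z i - r i)) = -ε • (v : Fin p → ℝ) := by
    intro v
    obtain ⟨ε, hε, z, hzP, hzres⟩ := Sext (xv v) (hxvP v)
    exact ⟨ε, hε, z, hzP, by rw [hzres, hxvres]⟩
  choose εv hεv zv hzvP hzvres using hreal2
  -- basis of the span
  set B : Module.Basis bs ℝ (Submodule.span ℝ S) :=
    (Module.Basis.span hbli).map (LinearEquiv.ofEq _ _ (by rw [Subtype.range_coe, hbspan])) with hB
  have hBapp : ∀ v : bs, (B v : Fin p → ℝ) = (v : Fin p → ℝ) := by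
    intro v
    simp [hB, Module.Basis.span_apply]
  -- coordinate continuity
  set Nr : ℝ := (Fintype.card bs + 1 : ℝ) with hNr
  have hNrpos : 0 < Nr := by positivity
  set g : Submodule.span ℝ S → ℝ :=
    fun w => ∑ v : bs, |B.equivFun w v| * (Nr * (1 + (εv v)⁻¹)) with hg
  have hgc : Continuous g := by
    apply continuous_finset_sum
    intro v _
    have h1 : Continuous fun w : Submodule.span ℝ S => B.equivFun w v :=
      (continuous_apply v).comp B.equivFun.toLinearMap.continuous_of_finiteDimensional
    exact (h1.abs).mul continuous_const
  have hg0 : g 0 = 0 := by simp [hg]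
  obtain ⟨δ, hδpos, hδ⟩ := Metric.continuousAt_iff.1 hgc.continuousAt 1 one_pos
  rw [hg0] at hδ
  refine ⟨δ, hδpos, |∑ i, f i (xt i)| + ∑ v : bs,
    (|∑ i, f i (xv v i)| + |∑ i, f i (zv v i)| + |∑ i, f i (xt i)|), ?_⟩
  intro u huW hunorm
  set w : Submodule.span ℝ S := ⟨u, huW⟩ with hw
  have hdistw : dist w 0 < δ := by
    rw [dist_zero_right]
    simpa [Submodule.coe_norm] using hunorm
  have hgw : g w < 1 := by
    have := hδ hdistw
    rw [Real.dist_eq, sub_zero] at this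
    calc g w ≤ |g w| := le_abs_self _
      _ < 1 := this
  -- coordinates
  set t : bs → ℝ := fun v => Nr * B.equivFun w v with ht
  have htv : ∀ v : bs, |t v| * (1 + (εv v)⁻¹) < 1 := by
    intro v
    have hterm : |B.equivFun w v| * (Nr * (1 + (εv v)⁻¹)) ≤ g w := by
      apply Finset.single_le_sum (f := fun v : bs => |B.equivFun w v| * (Nr * (1 + (εv v)⁻¹)))
        (fun v _ => by have := hεv v; positivity) (Finset.mem_univ v)
    calc |t v| * (1 + (εv v)⁻¹) = |B.equivFun w v| * (Nr * (1 + (εv v)⁻¹)) := by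
          rw [ht, abs_mul, abs_of_pos hNrpos]; ring
      _ ≤ g w := hterm
      _ < 1 := hgw
  have htv1 : ∀ v : bs, |t v| ≤ 1 := by
    intro v
    have h1 := htv v
    have h2 : (0:ℝ) < (εv v)⁻¹ := inv_pos.2 (hεv v)
    have hexp : |t v| * (1 + (εv v)⁻¹) = |t v| + |t v| * (εv v)⁻¹ := by ring
    have h3 : 0 ≤ |t v| * (εv v)⁻¹ := mul_nonneg (abs_nonneg _) h2.le
    linarith
  -- the three-point combination realizing (t v) • v
  set α : bs → ℝ := fun v => max (t v) 0 with hα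
  set β : bs → ℝ := fun v => max (-(t v)) 0 / εv v with hβ
  set γ : bs → ℝ := fun v => 1 - α v - β v with hγ
  have hαβγ : ∀ v : bs, 0 ≤ α v ∧ α v ≤ 1 ∧ 0 ≤ β v ∧ β v ≤ 1 ∧ 0 ≤ γ v ∧ γ v ≤ 1 ∧
      α v + β v + γ v = 1 ∧ α v - β v * εv v = t v := by
    intro v
    have h1 := htv v
    have hε := hεv v
    have hεinv : (0:ℝ) < (εv v)⁻¹ := inv_pos.2 hε
    have habs : (0:ℝ) ≤ |t v| := abs_nonneg _
    have hαle : α v ≤ |t v| := by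
      simp only [hα]; exact max_le (le_abs_self _) habs
    have hβle : β v * εv v ≤ |t v| := by
      simp only [hβ]
      rw [div_mul_cancel₀ _ hε.ne']
      exact max_le (neg_le_abs _) habs
    have hα0 : 0 ≤ α v := le_max_right _ _
    have hβ0 : 0 ≤ β v := div_nonneg (le_max_right _ _) hε.le
    have hβle' : β v ≤ |t v| * (εv v)⁻¹ := by
      simp only [hβ]
      rw [div_eq_mul_inv]
      exact mul_le_mul_of_nonneg_right (max_le (neg_le_abs _) habs) hεinv.le
    have hexp : |t v| * (1 + (εv v)⁻¹) = |t v| + |t v| * (εv v)⁻¹ := by ring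
    have hαβ : α v + β v < 1 := by linarith
    have hsum : α v + β v + γ v = 1 := by simp only [hγ]; ring
    have hdiff : α v - β v * εv v = t v := by
      simp only [hα, hβ]
      rw [div_mul_cancel₀ _ hε.ne']
      rcases le_total (t v) 0 with h | h
      · rw [max_eq_right h, max_eq_left (by linarith)]; ring
      · rw [max_eq_left h, max_eq_right (by linarith)]; ring
    have ht1 : |t v| ≤ 1 := htv1 v
    refine ⟨hα0, by linarith, hβ0, by linarith, by simp only [hγ]; linarith,
      by simp only [hγ]; linarith, hsum, hdiff⟩
  -- three point combinations
  set y : bs → Matrix (Fin n) (Fin p) ℝ :=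
    fun v => ∑ o : Fin 3, (![α v, β v, γ v] o) • (![xv v, zv v, xt] o) with hy
  have hw3 : ∀ v : bs, ∑ o : Fin 3, (![α v, β v, γ v]) o = 1 := by
    intro v
    rw [Fin.sum_univ_three]
    simpa using (hαβγ v).2.2.2.2.2.2.1
  have hw3n : ∀ v : bs, ∀ o : Fin 3, 0 ≤ (![α v, β v, γ v]) o := by
    intro v o
    obtain ⟨h1, h2, h3, h4, h5, h6, h7, h8⟩ := hαβγ v
    fin_cases o <;> simpa
  have hyP : ∀ (v : bs) (i : Fin n), y v i ∈ Ω i := by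
    intro v i
    exact sum_mem_P hΩcv _ _ (hw3n v) (hw3 v)
      (fun o i => by fin_cases o <;> simp [hxvP v i, hzvP v i, hxtP i]) i
  have hyres : ∀ v : bs, (∑ i, (y v i - r i)) = t v • (v : Fin p → ℝ) := by
    intro v
    simp only [hy]
    rw [sum_res r _ (hw3 v)]
    rw [Fin.sum_univ_three]
    simp only [Matrix.cons_val_zero, Matrix.cons_val_one, Matrix.head_cons,
      Matrix.cons_val_two, Matrix.tail_cons]
    rw [hxvres v, hzvres v, hxt0]
    obtain ⟨-, -, -, -, -, -, -, h8⟩ := hαβγ v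
    funext j
    simp only [Pi.add_apply, Pi.smul_apply, smul_eq_mul, Pi.zero_apply, Pi.neg_apply]
    have : α v - β v * εv v = t v := h8
    nlinarith [congrArg (fun z => z * (v : Fin p → ℝ) j) this]
  have hyval : ∀ v : bs, ∑ i, f i (y v i) ≤
      |∑ i, f i (xv v i)| + |∑ i, f i (zv v i)| + |∑ i, f i (xt i)| := by
    intro v
    obtain ⟨h1, h2, h3, h4, h5, h6, h7, h8⟩ := hαβγ v
    refine le_trans (sum_val hf _ _ (hw3n v) (hw3 v)) ?_
    rw [Fin.sum_univ_three]
    simp only [Matrix.cons_val_zero, Matrix.cons_val_one, Matrix.head_cons,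
      Matrix.cons_val_two, Matrix.tail_cons]
    have e1 := le_abs_self (∑ i, f i (xv v i))
    have e2 := le_abs_self (∑ i, f i (zv v i))
    have e3 := le_abs_self (∑ i, f i (xt i))
    have a1 := abs_nonneg (∑ i, f i (xv v i))
    have a2 := abs_nonneg (∑ i, f i (zv v i))
    have a3 := abs_nonneg (∑ i, f i (xt i))
    have b1 : α v * (∑ i, f i (xv v i)) ≤ |∑ i, f i (xv v i)| :=
      le_trans (mul_le_mul_of_nonneg_left e1 h1) (by nlinarith)
    have b2 : β v * (∑ i, f i (zv v i)) ≤ |∑ i, f i (zv v i)| :=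
      le_trans (mul_le_mul_of_nonneg_left e2 h3) (by nlinarith)
    have b3 : γ v * (∑ i, f i (xt i)) ≤ |∑ i, f i (xt i)| :=
      le_trans (mul_le_mul_of_nonneg_left e3 h5) (by nlinarith)
    linarith
  -- the final combination
  have hNr0 : Nr ≠ 0 := hNrpos.ne'
  have hwO1 : ∑ _o : Option bs, (Nr⁻¹ : ℝ) = 1 := by
    rw [Finset.sum_const, Finset.card_univ, Fintype.card_option, nsmul_eq_mul]
    rw [hNr]
    push_cast
    field_simp
  have hNrinv1 : (Nr⁻¹ : ℝ) ≤ 1 := by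
    rw [hNr]
    rw [inv_le_one_iff₀]
    right
    push_cast
    have : (0:ℝ) ≤ (Fintype.card bs : ℝ) := by positivity
    linarith
  refine ⟨∑ o : Option bs, Nr⁻¹ • (Option.elim o xt y), ?_, ?_, ?_⟩
  · intro i
    exact sum_mem_P hΩcv _ _ (fun o => by positivity) hwO1
      (fun o i => by rcases o with _ | v
                     · exact hxtP i
                     · exact hyP v i) i
  · rw [sum_res r _ hwO1]
    rw [Fintype.sum_option]
    simp only [Option.elim]
    rw [hxt0, smul_zero, zero_add]
    have : ∀ v : bs, Nr⁻¹ • (∑ i, (y v i - r i)) = B.equivFun w v • (v : Fin p → ℝ) := by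
      intro v
      rw [hyres v, smul_smul]
      simp only [ht]
      congr 1
      field_simp
    rw [Finset.sum_congr rfl fun v _ => this v]
    have hsum := B.sum_equivFun w
    have := congrArg (Subtype.val : Submodule.span ℝ S → (Fin p → ℝ)) hsum
    rw [show ((w : Submodule.span ℝ S) : Fin p → ℝ) = u from rfl] at this
    rw [← this]
    push_cast
    refine Finset.sum_congr rfl fun v _ => ?_
    rw [hBapp v]
  · refine le_trans (sum_val hf _ _ (fun o => by positivity) hwO1) ?_
    rw [Fintype.sum_option]
    simp only [Option.elim]
    have hxtb : Nr⁻¹ * (∑ i, f i (xt i)) ≤ |∑ i, f i (xt i)| := by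
      have e3 := le_abs_self (∑ i, f i (xt i))
      have a3 := abs_nonneg (∑ i, f i (xt i))
      nlinarith [inv_pos.2 hNrpos]
    refine add_le_add hxtb (Finset.sum_le_sum fun v _ => ?_)
    have h1 := hyval v
    have h2 : (0:ℝ) ≤ |∑ i, f i (xv v i)| + |∑ i, f i (zv v i)| + |∑ i, f i (xt i)| := by
      positivity
    nlinarith [inv_pos.2 hNrpos]

set_option maxHeartbeats 1000000 in
open Matrix Finset

section
variable {n p : ℕ}

lemma forward_dir (hn : 2 ≤ n)
    (f : Fin n → (Fin p → ℝ) → ℝ) (hf : ∀ i, ConvexOn ℝ Set.univ (f i))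
    (Ω : Fin n → Set (Fin p → ℝ)) (hΩcv : ∀ i, Convex ℝ (Ω i))
    (r : Matrix (Fin n) (Fin p) ℝ)
    (xt : Matrix (Fin n) (Fin p) ℝ)
    (hxt0 : (∑ i, (xt i - r i)) = 0)
    (hxtint : ∀ i, xt i ∈ intrinsicInterior ℝ (Ω i))
    (xs : Matrix (Fin n) (Fin p) ℝ) (hxs : ∀ i, xs i ∈ Ω i)
    (hfeas : (∑ i, (xs i - r i)) = 0)
    (hopt : ∀ x : Matrix (Fin n) (Fin p) ℝ,
        (∑ i, (x i - r i)) = 0 → (∀ i, x i ∈ Ω i) →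
          ∑ i, f i (xs i) ≤ ∑ i, f i (x i)) :
    ∃ d : Fin p → ℝ, ∀ i, ∀ y ∈ Ω i, f i (xs i) + d ⬝ᵥ (y - xs i) ≤ f i y := by
  classical
  haveI : NeZero n := ⟨by omega⟩
  have hxtP : ∀ i, xt i ∈ Ω i := fun i => intrinsicInterior_subset (hxtint i)
  -- the achievable set
  set S : Set (Fin p → ℝ) :=
    {u | ∃ x : Matrix (Fin n) (Fin p) ℝ, (∀ i, x i ∈ Ω i) ∧ (∑ i, (x i - r i)) = u} with hS
  set W : Submodule ℝ (Fin p → ℝ) := Submodule.span ℝ S with hW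
  -- extension property of S at 0
  have Sext : ∀ x : Matrix (Fin n) (Fin p) ℝ, (∀ i, x i ∈ Ω i) →
      ∃ ε : ℝ, 0 < ε ∧ ∃ z : Matrix (Fin n) (Fin p) ℝ, (∀ i, z i ∈ Ω i) ∧
        (∑ i, (z i - r i)) = -ε • (∑ i, (x i - r i)) :=
    Sext_lemma hn Ω hΩcv r xt hxt0 hxtint
  -- ball realization
  have ball : ∃ δ : ℝ, 0 < δ ∧ ∃ M0 : ℝ, ∀ u : Fin p → ℝ, u ∈ W → ‖u‖ < δ →
      ∃ x : Matrix (Fin n) (Fin p) ℝ, (∀ i, x i ∈ Ω i) ∧ (∑ i, (x i - r i)) = u ∧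
        ∑ i, f i (x i) ≤ M0 :=
    ball_real hn f hf Ω hΩcv r xt hxt0 hxtP S hS Sext
  obtain ⟨δ, hδ, M0, hball⟩ := ball
  obtain ⟨Q, hQ⟩ := Submodule.exists_isCompl W
  set Vs : ℝ := ∑ i, f i (xs i) with hVs
  set G : Set ((Fin p → ℝ) × ℝ) :=
    {a | ∃ x : Matrix (Fin n) (Fin p) ℝ, (∀ i, x i ∈ Ω i) ∧ ∃ qq ∈ Q,
      a.1 = (∑ i, (x i - r i)) + qq ∧ (∑ i, f i (x i)) ≤ a.2} with hG
  have hGconv : Convex ℝ G := by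
    rintro ⟨u1, t1⟩ h1 ⟨u2, t2⟩ h2 a b ha hb hab
    obtain ⟨x1, hx1, q1, hq1, he1, hv1⟩ := h1
    obtain ⟨x2, hx2, q2, hq2, he2, hv2⟩ := h2
    dsimp only at he1 he2 hv1 hv2
    have hwsum : ∑ o : Fin 2, (![a, b]) o = 1 := by rw [Fin.sum_univ_two]; simpa using hab
    have hwn : ∀ o : Fin 2, 0 ≤ (![a, b]) o := by
      intro o; fin_cases o <;> simpa
    refine ⟨∑ o : Fin 2, (![a, b] o) • (![x1, x2] o),
      fun i => sum_mem_P hΩcv _ _ hwn hwsum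
        (fun o i => by fin_cases o <;> simp [hx1 i, hx2 i]) i,
      a • q1 + b • q2, Q.add_mem (Q.smul_mem a hq1) (Q.smul_mem b hq2), ?_, ?_⟩
    · show a • u1 + b • u2 = _
      rw [sum_res r _ hwsum, Fin.sum_univ_two]
      simp only [Matrix.cons_val_zero, Matrix.cons_val_one, Matrix.head_cons]
      rw [he1, he2]
      funext j
      simp only [Pi.add_apply, Pi.smul_apply, smul_eq_mul]
      ring
    · show ∑ i, f i _ ≤ a * t1 + b * t2
      refine le_trans (sum_val hf _ _ hwn hwsum) ?_
      rw [Fin.sum_univ_two]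
      simp only [Matrix.cons_val_zero, Matrix.cons_val_one, Matrix.head_cons]
      exact add_le_add (mul_le_mul_of_nonneg_left hv1 ha) (mul_le_mul_of_nonneg_left hv2 hb)
  have hresW : ∀ x : Matrix (Fin n) (Fin p) ℝ, (∀ i, x i ∈ Ω i) →
      (∑ i, (x i - r i)) ∈ W := fun x hx => Submodule.subset_span ⟨x, hx, rfl⟩
  -- the open set inside G
  set πc : (Fin p → ℝ) →ₗ[ℝ] (Fin p → ℝ) := W.subtype.comp (W.linearProjOfIsCompl Q hQ) with hπc
  set O : Set ((Fin p → ℝ) × ℝ) := {a | ‖πc a.1‖ < δ ∧ M0 < a.2} with hO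
  have hOopen : IsOpen O := by
    have hc : Continuous fun a : (Fin p → ℝ) × ℝ => ‖πc a.1‖ :=
      (πc.continuous_of_finiteDimensional.comp continuous_fst).norm
    exact (isOpen_lt hc continuous_const).inter (isOpen_lt continuous_const continuous_snd)
  have hOG : O ⊆ G := by
    rintro ⟨u, t⟩ ⟨h1, h2⟩
    obtain ⟨x, hxP, hxres, hxval⟩ := hball (πc u) (W.linearProjOfIsCompl Q hQ u).2 h1
    refine ⟨x, hxP, ↑(Q.linearProjOfIsCompl W hQ.symm u), (Q.linearProjOfIsCompl W hQ.symm u).2,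
      ?_, le_of_lt (lt_of_le_of_lt hxval h2)⟩
    show u = _ + _
    rw [hxres]
    exact (Submodule.projection_add_projection_eq_self hQ u).symm
  have hb₀ : ((0 : Fin p → ℝ), M0 + 1) ∈ interior G := by
    apply interior_maximal hOG hOopen
    constructor
    · simpa using hδ
    · simp
  have hz₀ : ((0 : Fin p → ℝ), Vs) ∉ interior G := by
    intro h
    rw [mem_interior_iff_mem_nhds, Metric.mem_nhds_iff] at h
    obtain ⟨ε, hε, hball2⟩ := h
    have hmem : ((0 : Fin p → ℝ), Vs - ε/2) ∈ G := by
      apply hball2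
      rw [Metric.mem_ball, Prod.dist_eq]
      simp only [dist_self, Real.dist_eq]
      rw [max_lt_iff]
      constructor
      · exact hε
      · rw [abs_of_nonpos (by linarith)]; linarith
    obtain ⟨x, hxP, qq, hqq, he, hv⟩ := hmem
    have hrx : (∑ i, (x i - r i)) ∈ Q := by
      have h1 : (∑ i, (x i - r i)) = -qq := by
        have := he.symm
        simp only at this
        linear_combination (norm := module) this
      rw [h1]; exact Q.neg_mem hqq
    have hr0 : (∑ i, (x i - r i)) = 0 :=
      Submodule.disjoint_def.1 hQ.disjoint _ (hresW x hxP) hrx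
    have := hopt x hr0 hxP
    simp only at hv
    linarith
  obtain ⟨φ, hsep⟩ := geometric_hahn_banach_open_point hGconv.interior isOpen_interior hz₀
  have hGle : ∀ a ∈ G, φ a ≤ φ ((0 : Fin p → ℝ), Vs) := by
    intro a ha
    by_contra hlt
    push_neg at hlt
    set Δ : ℝ := φ a - φ ((0 : Fin p → ℝ), Vs) with hΔ
    have hΔpos : 0 < Δ := by simp only [hΔ]; linarith
    set sd : ℝ := φ a - φ ((0 : Fin p → ℝ), M0 + 1) with hsd
    have hmaxΔ : Δ ≤ max sd Δ := le_max_right _ _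
    have hden : (0:ℝ) < max sd Δ + 1 := by linarith
    set θ : ℝ := Δ / (max sd Δ + 1) with hθ
    have hθpos : 0 < θ := div_pos hΔpos hden
    have hθle : θ + (1 - θ) = 1 := by ring
    have hcombo := hGconv.combo_interior_self_mem_interior hb₀ ha hθpos
      (by
        have : θ ≤ 1 := by
          rw [hθ, div_le_one hden]; linarith
        linarith) hθle
    have hφc := hsep _ hcombo
    rw [map_add, _root_.map_smul, _root_.map_smul] at hφc
    simp only [smul_eq_mul] at hφc
    have hkey : θ * (max sd Δ + 1) = Δ := by
      rw [hθ]; field_simp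
    nlinarith [mul_le_mul_of_nonneg_left (le_max_left sd Δ) hθpos.le]
  set μ : ℝ := φ ((0 : Fin p → ℝ), (1:ℝ)) with hμ
  set lv : Fin p → ℝ := fun j => φ ((Pi.single j (1:ℝ) : Fin p → ℝ), (0:ℝ)) with hlv
  have hdecomp : ∀ (u : Fin p → ℝ) (t : ℝ), φ (u, t) = (∑ j, u j * lv j) + t * μ := by
    intro u t
    have hrep : ((u, t) : (Fin p → ℝ) × ℝ)
        = (∑ j, (u j) • ((Pi.single j (1:ℝ) : Fin p → ℝ), (0:ℝ))) + t • ((0 : Fin p → ℝ), (1:ℝ)) := by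
      rw [Prod.ext_iff]
      constructor
      · simp only [Prod.fst_add, Prod.fst_sum, Prod.smul_fst, Prod.smul_snd, smul_zero]
        funext k
        simp [Finset.sum_apply, Pi.single_apply]
      · simp only [Prod.snd_add, Prod.snd_sum, Prod.smul_snd, smul_eq_mul]
        simp
    rw [hrep, map_add, map_sum, _root_.map_smul]
    simp only [_root_.map_smul, smul_eq_mul]
    rfl
  have hQl : ∀ qq ∈ Q, (∑ j, qq j * lv j) = 0 := by
    intro qq hqq
    by_contra hL
    have h2 : ∀ s : ℝ, s * (∑ j, qq j * lv j) + (∑ i, f i (xt i)) * μ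
        ≤ φ ((0 : Fin p → ℝ), Vs) := by
      intro s
      have hmem : (((∑ i, (xt i - r i)) + s • qq : Fin p → ℝ), (∑ i, f i (xt i))) ∈ G :=
        ⟨xt, hxtP, s • qq, Q.smul_mem s hqq, rfl, le_rfl⟩
      have := hGle _ hmem
      rw [hxt0, zero_add, hdecomp] at this
      have hss : (∑ j, (s • qq) j * lv j) = s * ∑ j, qq j * lv j := by
        rw [Finset.mul_sum]
        refine Finset.sum_congr rfl fun j _ => ?_
        simp [mul_assoc]
      rw [hss] at this
      exact this
    set L : ℝ := ∑ j, qq j * lv j with hLdef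
    set C : ℝ := φ ((0 : Fin p → ℝ), Vs) - (∑ i, f i (xt i)) * μ with hC
    have h3 := h2 ((C + 1) / L)
    rw [div_mul_cancel₀ _ hL] at h3
    simp only [hC] at h3
    linarith
  have hμneg : μ < 0 := by
    have hμ0 : μ ≤ 0 := by
      by_contra hpos
      push_neg at hpos
      set C : ℝ := φ ((0 : Fin p → ℝ), Vs) with hC
      set t' : ℝ := max (∑ i, f i (xt i)) ((C + 1) / μ) with ht'
      have hmem : ((0 : Fin p → ℝ), t') ∈ G :=
        ⟨xt, hxtP, 0, Q.zero_mem, by rw [hxt0, add_zero], le_max_left _ _⟩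
      have h1 := hGle _ hmem
      rw [hdecomp] at h1
      simp only [Pi.zero_apply, zero_mul, Finset.sum_const_zero, zero_add] at h1
      have h2 : (C + 1) / μ ≤ t' := le_max_right _ _
      rw [div_le_iff₀ hpos] at h2
      linarith
    rcases hμ0.lt_or_eq with h | h
    · exact h
    · exfalso
      have := hsep _ hb₀
      rw [hdecomp, hdecomp, h] at this
      simp at this
  -- the subgradient vector
  refine ⟨fun j => lv j / (-μ), ?_⟩
  have main : ∀ x : Matrix (Fin n) (Fin p) ℝ, (∀ i, x i ∈ Ω i) →
      Vs + ∑ j, ((∑ i, (x i - r i)) j) * (lv j / (-μ)) ≤ ∑ i, f i (x i) := by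
    intro x hxP
    have hmem : (((∑ i, (x i - r i)) + 0 : Fin p → ℝ), ∑ i, f i (x i)) ∈ G :=
      ⟨x, hxP, 0, Q.zero_mem, rfl, le_rfl⟩
    have h1 := hGle _ hmem
    rw [add_zero] at h1
    rw [hdecomp, hdecomp] at h1
    simp only [Pi.zero_apply, zero_mul, Finset.sum_const_zero, zero_add] at h1
    have h2 : (0:ℝ) < -μ := by linarith
    have hsum : ∑ j, ((∑ i, (x i - r i)) j) * (lv j / (-μ))
        = (∑ j, ((∑ i, (x i - r i)) j) * lv j) / (-μ) := by
      rw [Finset.sum_div]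
      exact Finset.sum_congr rfl fun j _ => (mul_div_assoc _ _ _).symm
    rw [hsum, ← le_sub_iff_add_le']
    rw [div_le_iff₀ h2]
    nlinarith [h1]
  intro i y hy
  classical
  have hup : ∀ i', Function.update xs i y i' ∈ Ω i' := by
    intro i'
    rcases eq_or_ne i' i with rfl | hne
    · simpa [Function.update] using hy
    · simp only [Function.update, dif_neg hne]; exact hxs i'
  have hres : (∑ i', (Function.update xs i y i' - r i')) = y - xs i := by
    have hter : ∀ i', Function.update xs i y i' - r i'
        = Function.update (fun k => xs k - r k) i (y - r i) i' := by
      intro i'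
      rcases eq_or_ne i' i with rfl | hne
      · simp [Function.update]
      · simp only [Function.update, dif_neg hne]
    rw [Finset.sum_congr rfl fun i' _ => hter i']
    rw [Finset.sum_update_of_mem (Finset.mem_univ i)]
    rw [Finset.sum_sdiff_eq_sub (Finset.subset_univ _), Finset.sum_singleton, hfeas]
    funext j
    simp only [Pi.add_apply, Pi.sub_apply, Pi.zero_apply]
    ring
  have hval : (∑ i', f i' (Function.update xs i y i')) = Vs - f i (xs i) + f i y := by
    have hter : ∀ i', f i' (Function.update xs i y i')
        = Function.update (fun k => f k (xs k)) i (f i y) i' := by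
      intro i'
      rcases eq_or_ne i' i with rfl | hne
      · simp [Function.update]
      · simp only [Function.update, dif_neg hne]
    rw [Finset.sum_congr rfl fun i' _ => hter i']
    rw [Finset.sum_update_of_mem (Finset.mem_univ i)]
    rw [Finset.sum_sdiff_eq_sub (Finset.subset_univ _), Finset.sum_singleton, hVs]
    ring
  have h1 := main _ hup
  rw [hres, hval] at h1
  have hdot : (fun j => lv j / (-μ)) ⬝ᵥ (y - xs i) = ∑ j, (y - xs i) j * (lv j / (-μ)) := by
    simp only [dotProduct]
    exact Finset.sum_congr rfl fun j _ => mul_comm _ _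
  rw [hdot]
  linarith

end

/-- First-order optimality conditions for the distributed resource allocation problem
`min Σᵢ fᵢ(xᵢ) s.t. Σᵢ (xᵢ - rᵢ) = 0, xᵢ ∈ Ωᵢ` (Lemma 1). -/
theorem stmt_0 (n p : ℕ) (hn : 2 ≤ n) (hp : 1 ≤ p)
    (c : ℝ) (hc : c ≠ 0)
    (U : Matrix (Fin (n - 1)) (Fin n) ℝ)
    -- `U` has null space `{a𝟙 : a ∈ ℝ}` (hence, by rank-nullity, full row rank)
    (hU : ∀ v : Fin n → ℝ, U.mulVec v = 0 ↔ ∃ a : ℝ, v = fun _ => a)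
    (f : Fin n → (Fin p → ℝ) → ℝ)
    (hf : ∀ i, ConvexOn ℝ Set.univ (f i))
    (Ω : Fin n → Set (Fin p → ℝ))
    (hΩne : ∀ i, (Ω i).Nonempty)
    (hΩcl : ∀ i, IsClosed (Ω i))
    (hΩcv : ∀ i, Convex ℝ (Ω i))
    (r : Matrix (Fin n) (Fin p) ℝ)
    -- Slater condition
    (slater : ∃ xt : Matrix (Fin n) (Fin p) ℝ,
      (∑ i, (xt i - r i)) = 0 ∧ ∀ i, xt i ∈ intrinsicInterior ℝ (Ω i))
    (xs : Matrix (Fin n) (Fin p) ℝ)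
    (hxs : ∀ i, xs i ∈ Ω i) :
    -- `xs` is an optimal solution of the resource allocation problem
    ((∑ i, (xs i - r i)) = 0 ∧
      ∀ x : Matrix (Fin n) (Fin p) ℝ,
        (∑ i, (x i - r i)) = 0 → (∀ i, x i ∈ Ω i) →
          ∑ i, f i (xs i) ≤ ∑ i, f i (x i))
    ↔
    (∃ (q : Matrix (Fin (n - 1)) (Fin p) ℝ) (D : Matrix (Fin n) (Fin p) ℝ),
      (∀ i, ∀ y ∈ Ω i, f i (xs i) + (D i) ⬝ᵥ (y - xs i) ≤ f i y) ∧
      xs - r + c • (Uᵀ * q) = 0 ∧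
      U * D = 0) := by
  classical
  have hU1 : U.mulVec (fun _ => (1:ℝ)) = 0 := (hU _).2 ⟨1, rfl⟩
  have hUsum : ∀ k, ∑ i, U k i = 0 := by
    intro k
    have := congrFun hU1 k
    simpa [Matrix.mulVec, dotProduct] using this
  constructor
  · rintro ⟨h1, h2⟩
    obtain ⟨xt, hxt0, hxtint⟩ := slater
    obtain ⟨d, hd⟩ := forward_dir hn f hf Ω hΩcv r xt hxt0 hxtint xs hxs h1 h2
    have hcol : ∀ j : Fin p, ∑ i, (c⁻¹ * (r i j - xs i j)) = 0 := by
      intro j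
      have e1 := congrFun h1 j
      simp only [Finset.sum_apply, Pi.sub_apply, Pi.zero_apply] at e1
      rw [← Finset.mul_sum]
      have : ∑ i, (r i j - xs i j) = 0 := by
        rw [Finset.sum_sub_distrib] at e1 ⊢
        linarith
      rw [this, mul_zero]
    choose wcol hwcol using fun j => Ut_surj hn U hU (fun i => c⁻¹ * (r i j - xs i j)) (hcol j)
    refine ⟨Matrix.of fun k j => wcol j k, Matrix.of fun _ j => d j, ?_, ?_, ?_⟩
    · intro i y hy
      exact hd i y hy
    · funext i j
      have hUq : (Uᵀ * Matrix.of fun k j => wcol j k) i j = c⁻¹ * (r i j - xs i j) := by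
        have := congrFun (hwcol j) i
        simp only [Matrix.mulVec, dotProduct] at this
        rw [← this]
        simp [Matrix.mul_apply, Matrix.transpose_apply]
      simp only [Matrix.add_apply, Matrix.sub_apply, Matrix.smul_apply, smul_eq_mul,
        Matrix.zero_apply, hUq]
      field_simp
      ring
    · funext k j
      simp only [Matrix.mul_apply, Matrix.of_apply, Matrix.zero_apply]
      rw [← Finset.sum_mul, hUsum k, zero_mul]
  · rintro ⟨q, D, hsub, heq, hUD⟩
    have hentry : ∀ i j, xs i j - r i j + c * (Uᵀ * q) i j = 0 := by
      intro i j
      have := congrFun (congrFun heq i) j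
      simpa [Matrix.add_apply, Matrix.sub_apply, Matrix.smul_apply, smul_eq_mul] using this
    have hfeas : (∑ i, (xs i - r i)) = 0 := by
      funext j
      have hcolsum : ∑ i, (Uᵀ * q) i j = 0 := by
        calc ∑ i, (Uᵀ * q) i j = ∑ i, ∑ k, U k i * q k j := by
              refine Finset.sum_congr rfl fun i _ => ?_
              simp [Matrix.mul_apply, Matrix.transpose_apply]
          _ = ∑ k, (∑ i, U k i) * q k j := by
              rw [Finset.sum_comm]
              simp [Finset.sum_mul]
          _ = 0 := Finset.sum_eq_zero fun k _ => by rw [hUsum k, zero_mul]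
      calc (∑ i, (xs i - r i)) j = ∑ i, (xs i j - r i j) := by
            simp [Finset.sum_apply]
        _ = ∑ i, -(c * (Uᵀ * q) i j) := Finset.sum_congr rfl fun i _ => by
            have := hentry i j; linarith
        _ = -(c * ∑ i, (Uᵀ * q) i j) := by
            simp [Finset.mul_sum]
        _ = (0 : Fin p → ℝ) j := by rw [hcolsum, mul_zero, neg_zero]; simp
    refine ⟨hfeas, fun x hx hxΩ => ?_⟩
    have hcols : ∀ j, ∃ a : ℝ, (fun i => D i j) = fun _ => a := by
      intro j
      apply (hU _).1
      funext k
      have h1 : U.mulVec (fun i => D i j) k = (U * D) k j := by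
        simp [Matrix.mulVec, dotProduct, Matrix.mul_apply]
      rw [h1, hUD]
      simp
    choose av hav using hcols
    have hsum0 : ∑ i, D i ⬝ᵥ (x i - xs i) = 0 := by
      calc ∑ i, D i ⬝ᵥ (x i - xs i) = ∑ i, ∑ j, D i j * (x i j - xs i j) := by
            refine Finset.sum_congr rfl fun i _ => ?_
            simp [dotProduct]
        _ = ∑ j, ∑ i, D i j * (x i j - xs i j) := Finset.sum_comm
        _ = ∑ j, av j * ∑ i, (x i j - xs i j) := by
            refine Finset.sum_congr rfl fun j _ => ?_
            rw [Finset.mul_sum]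
            refine Finset.sum_congr rfl fun i _ => ?_
            have := congrFun (hav j) i
            rw [this]
        _ = 0 := by
            refine Finset.sum_eq_zero fun j _ => ?_
            have e1 := congrFun hx j
            have e2 := congrFun hfeas j
            simp only [Finset.sum_apply, Pi.sub_apply, Pi.zero_apply,
              Finset.sum_sub_distrib] at e1 e2
            have : ∑ i, (x i j - xs i j) = 0 := by
              rw [Finset.sum_sub_distrib]
              linarith
            rw [this, mul_zero]
    have hle := Finset.sum_le_sum fun i (_ : i ∈ Finset.univ) => hsub i (x i) (hxΩ i)
    rw [Finset.sum_add_distrib, hsum0, add_zero] at hle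
    exact hle


end
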